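/- Key lemma for the bit-chipping field: let τ̃ = [ã_1|...|ã_k] be a target simplex of bit-size n, and let τ = [2^{i_1}|...|2^{i_q}|b|a_{q+2}|...|a_k] be any not-fully-dyadic target simplex reachable from τ̃ in the V∂-graph of V_bc (with dyadic prefix of length q and breakpoint value b not a power of 2). Then a_i = ã_i for all i ≥ q+2 (the right part is inherited from τ̃), and either b = ã_{q+1} (τ is raw), or b < max(2^{i_1},...,2^{i_q}) and b ∈ B_{q+1}, where B_1 = ltrims(ã_1) and B_{j+1} = ltrims({ã_{j+1}, ã_j + ã_{j+1}} ∪ {2^i + ã_{j+1} : 0 ≤ i ≤ n-1} ∪ {b + ã_{j+1} : b ∈ B_j}). -/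

import Mathlib

/-- `lpow b` is the largest power of 2 not exceeding `b` (for `b ≥ 1`). -/
def lpow (b : ℕ) : ℕ := 2 ^ Nat.log 2 b

/-- `ltrim b = b - lpow b`. -/
def ltrim (b : ℕ) : ℕ := b - lpow b

/-- All entries of the sequence are positive (nondegenerate simplex of `K(ℕ,1)`). -/
def posL (l : List ℕ) : Prop := ∀ a ∈ l, 1 ≤ a

/-- The length `q` of the dyadic part of `[a_1 | ⋯ | a_k]`: the largest `q` such that
`a_1, …, a_q` are all powers of 2. -/
def dyLen (l : List ℕ) : ℕ :=
  (l.takeWhile fun a => a == 2 ^ Nat.log 2 a).length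

/-- `l` is fully dyadic: all entries are powers of 2. -/
def fullyDyadic (l : List ℕ) : Prop := dyLen l = l.length

/-- Source simplices of type (a) of the bit-chipping field: not fully dyadic, with no
peak, i.e. the dyadic part `a_1 ≤ ⋯ ≤ a_q` is nondecreasing and (if nonempty) its last
entry is smaller than the breakpoint value `a_{q+1}`. -/
def srcA (l : List ℕ) : Prop :=
  dyLen l < l.length ∧
  (∀ i, i + 1 < dyLen l → l.getD i 0 ≤ l.getD (i + 1) 0) ∧
  (∀ i, i + 1 = dyLen l → l.getD i 0 < l.getD (dyLen l) 0)

/-- The bit-chipping field on a type (a) source: split the breakpoint value `b` into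
`lpow b | ltrim b`. -/
def VbcA (l : List ℕ) : List ℕ :=
  l.take (dyLen l) ++ [lpow (l.getD (dyLen l) 0), ltrim (l.getD (dyLen l) 0)] ++
    l.drop (dyLen l + 1)

/-- Source simplices of type (b) of the bit-chipping field: fully dyadic sequences
`a_1 ≤ ⋯ ≤ a_{k-1} < a_k` with `a_k ≥ 2`. -/
def srcB (l : List ℕ) : Prop :=
  fullyDyadic l ∧ l ≠ [] ∧
  (∀ i, i + 2 < l.length → l.getD i 0 ≤ l.getD (i + 1) 0) ∧
  (∀ i, i + 2 = l.length → l.getD i 0 < l.getD (i + 1) 0) ∧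
  2 ≤ l.getD (l.length - 1) 0

/-- The bit-chipping field on a type (b) source: split the last entry into two equal
halves. -/
def VbcB (l : List ℕ) : List ℕ :=
  l.dropLast ++ [l.getD (l.length - 1) 0 / 2, l.getD (l.length - 1) 0 / 2]

/-- The bit-chipping vector field `V_bc`, as a relation: `VbcRel σ τ` iff `σ` is a
source (of type (a) or (b)) and `τ = V_bc σ`. -/
def VbcRel (σ τ : List ℕ) : Prop :=
  (srcA σ ∧ τ = VbcA σ) ∨ (srcB σ ∧ τ = VbcB σ)

/-- The face operator `∂ᵢ` on a simplex `[a_1 | ⋯ | a_k]` of `K(ℕ,1)`: `∂_0` deletes the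
first entry, `∂_k` the last, and for `0 < i < k`, `∂ᵢ` replaces `a_i, a_{i+1}` by their
sum. -/
def faceN (i : ℕ) (l : List ℕ) : List ℕ :=
  if i = 0 then l.tail
  else if i = l.length then l.dropLast
  else l.take (i - 1) ++ [l.getD (i - 1) 0 + l.getD i 0] ++ l.drop (i + 1)

/-- The set of iterated `ltrim` values of `a` (empty if `a` is a power of 2). -/
def ltrims : ℕ → Finset ℕ
  | a =>
    if h : ltrim a = 0 then ∅
    else
      have ha : 0 < a := by
        rcases Nat.eq_zero_or_pos a with h0 | h0
        · exfalso; apply h; simp [h0, ltrim, lpow]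
        · exact h0
      have : ltrim a < a := Nat.sub_lt ha (Nat.pow_pos (by norm_num))
      insert (ltrim a) (ltrims (ltrim a))
  termination_by a => a

/-- The sets `B_1, B_2, …` of the key lemma: `B_1 = ltrims (ã_1)` and
`B_{j+1} = ltrims({ã_{j+1}, ã_j + ã_{j+1}} ∪ {2^i + ã_{j+1} : 0 ≤ i ≤ n-1} ∪ {b + ã_{j+1} : b ∈ B_j})`. -/
def Bset (ta : ℕ → ℕ) (n : ℕ) : ℕ → Finset ℕ
  | 0 => ∅
  | 1 => ltrims (ta 1)
  | (j + 2) =>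
      (insert (ta (j + 2)) (insert (ta (j + 1) + ta (j + 2))
        (((Finset.range n).image fun i => 2 ^ i + ta (j + 2)) ∪
          ((Bset ta n (j + 1)).image fun b => b + ta (j + 2))))).biUnion ltrims

/-- The edges of the `V∂`-graph of the bit-chipping field. -/
def edgeBc (x y : List ℕ) : Prop :=
  (posL x ∧ VbcRel x y) ∨
  ((∃ s, posL s ∧ VbcRel s x) ∧
    ∃ i ≤ x.length, y = faceN i x ∧ posL y ∧ ¬ VbcRel y x ∧ ¬ ∃ s', posL s' ∧ VbcRel s' y)

/-- The bit-size of a simplex: `size [a_1 | ⋯ | a_k] = Σᵢ (1 + ⌊log₂ (aᵢ + 1)⌋)`. -/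
def sizeL (l : List ℕ) : ℕ := (l.map fun a => 1 + Nat.log 2 (a + 1)).sum

def isPow (n : ℕ) : Prop := n = 2 ^ Nat.log 2 n

instance : DecidablePred isPow := fun n => by unfold isPow; infer_instance

lemma lpow_pos (b : ℕ) : 0 < lpow b := Nat.pow_pos (by norm_num)

lemma lpow_le_self {b : ℕ} (hb : 1 ≤ b) : lpow b ≤ b :=
  Nat.pow_log_le_self 2 (by omega)

lemma lt_two_mul_lpow (b : ℕ) : b < 2 * lpow b := by
  rcases Nat.eq_zero_or_pos b with h | h
  · simp [h, lpow_pos]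
  · have := Nat.lt_pow_succ_log_self (by norm_num : 1 < 2) b
    have : b < 2 ^ Nat.log 2 b * 2 := by rwa [pow_succ] at this
    unfold lpow; omega

lemma isPow_two_pow (k : ℕ) : isPow (2 ^ k) := by
  unfold isPow; rw [Nat.log_pow (by norm_num)]

lemma lpow_two_pow (k : ℕ) : lpow (2 ^ k) = 2 ^ k := by
  unfold lpow; rw [Nat.log_pow (by norm_num)]

lemma isPow_lpow (b : ℕ) : isPow (lpow b) := isPow_two_pow _

lemma lpow_eq_self_of {b : ℕ} (h : isPow b) : lpow b = b := h.symm

lemma ltrim_eq_zero_iff {b : ℕ} (hb : 1 ≤ b) : ltrim b = 0 ↔ isPow b := by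
  have h1 := lpow_le_self hb
  simp only [ltrim, isPow, lpow] at *
  generalize (2 : ℕ) ^ Nat.log 2 b = P at *
  omega

lemma ltrim_pos_of {b : ℕ} (hb : 1 ≤ b) (h : ¬ isPow b) : 1 ≤ ltrim b := by
  have h2 : ltrim b ≠ 0 := fun h0 => h ((ltrim_eq_zero_iff hb).mp h0)
  omega

lemma lpow_add_ltrim {b : ℕ} (hb : 1 ≤ b) : lpow b + ltrim b = b := by
  have := lpow_le_self hb; unfold ltrim; omega

lemma ltrim_lt_lpow {b : ℕ} (hb : 1 ≤ b) : ltrim b < lpow b := by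
  have := lt_two_mul_lpow b; unfold ltrim; omega

lemma lpow_eq_of {k m : ℕ} (h1 : 2 ^ k ≤ m) (h2 : m < 2 ^ (k + 1)) : lpow m = 2 ^ k := by
  unfold lpow; rw [Nat.log_eq_of_pow_le_of_lt_pow h1 h2]

lemma ltrim_eq_of {k m : ℕ} (h1 : 2 ^ k ≤ m) (h2 : m < 2 ^ (k + 1)) : ltrim m = m - 2 ^ k := by
  unfold ltrim; rw [lpow_eq_of h1 h2]

/-- merging two powers: `lpow`/`ltrim` of `2^x + 2^y`, `y < x`. -/
lemma lpow_add_pow_lt {x y : ℕ} (h : y < x) :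
    lpow (2 ^ x + 2 ^ y) = 2 ^ x ∧ ltrim (2 ^ x + 2 ^ y) = 2 ^ y := by
  have h1 : 2 ^ x ≤ 2 ^ x + 2 ^ y := Nat.le_add_right _ _
  have hyx : (2:ℕ) ^ y < 2 ^ x := Nat.pow_lt_pow_right (by norm_num) h
  have hp : (2:ℕ) ^ (x+1) = 2 * 2 ^ x := by rw [pow_succ]; ring
  have h2 : 2 ^ x + 2 ^ y < 2 ^ (x + 1) := by
    rw [hp]; generalize (2:ℕ) ^ x = P at *; generalize (2:ℕ) ^ y = Q at *; omega
  exact ⟨lpow_eq_of h1 h2, by rw [ltrim_eq_of h1 h2]; omega⟩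

lemma lpow_add_small {a b : ℕ} (hb : 1 ≤ b) (h : b < 2 ^ a) :
    lpow (2 ^ a + b) = 2 ^ a ∧ ltrim (2 ^ a + b) = b := by
  have h1 : 2 ^ a ≤ 2 ^ a + b := Nat.le_add_right _ _
  have hp : (2:ℕ) ^ (a+1) = 2 * 2 ^ a := by rw [pow_succ]; ring
  have h2 : 2 ^ a + b < 2 ^ (a + 1) := by
    rw [hp]; generalize (2:ℕ) ^ a = P at *; omega
  exact ⟨lpow_eq_of h1 h2, by rw [ltrim_eq_of h1 h2]; omega⟩

/-- a power `X` with `b < X < 2 * lpow b` is impossible for `b ≥ 1`. -/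
lemma no_pow_between {b X : ℕ} (hb : 1 ≤ b) (hX : isPow X) (h1 : b < X)
    (h2 : X < 2 * lpow b) : False := by
  obtain ⟨e, he⟩ : ∃ e, X = 2 ^ e := ⟨Nat.log 2 X, hX⟩
  have hf : lpow b = 2 ^ Nat.log 2 b := rfl
  have hlb := lpow_le_self hb
  -- 2 ^ e > b ≥ lpow b = 2 ^ f  →  e > f  →  2^e ≥ 2 * 2^f
  set f := Nat.log 2 b with hfdef
  have hgt : 2 ^ f < 2 ^ e := by omega
  have hef : f < e := (Nat.pow_lt_pow_iff_right (by norm_num)).mp hgt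
  have h3 : 2 ^ (f + 1) ≤ 2 ^ e := Nat.pow_le_pow_right (by norm_num) (by omega)
  have hp : (2:ℕ) ^ (f+1) = 2 * 2 ^ f := by rw [pow_succ]; ring
  rw [hp] at h3
  generalize hq : (2:ℕ) ^ e = Q at *
  generalize (2:ℕ) ^ f = P at *
  omega
lemma lpow_add_lpow {b : ℕ} (hb : 1 ≤ b) (hnp : ¬ isPow b) :
    lpow (lpow b + b) = 2 * lpow b ∧ ltrim (lpow b + b) = ltrim b := by
  set f := Nat.log 2 b with hf
  have hfb : lpow b = 2 ^ f := rfl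
  have h1 := lpow_le_self hb
  have h2 := lt_two_mul_lpow b
  have hps : (2:ℕ) ^ (f + 1) = 2 * 2 ^ f := by rw [pow_succ]; ring
  have hps2 : (2:ℕ) ^ (f + 2) = 4 * 2 ^ f := by ring
  have e1 : 2 ^ (f + 1) ≤ lpow b + b := by rw [hfb] at *; omega
  have e2 : lpow b + b < 2 ^ (f + 1 + 1) := by rw [hps2] at *; rw [hfb] at *; omega
  have := lpow_eq_of e1 e2
  have ht := ltrim_eq_of e1 e2
  constructor
  · rw [this, hps, hfb]
  · rw [ht, hps]
    have : ltrim b = b - lpow b := rfl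
    rw [hfb] at *; omega

lemma ltrims_eq (a : ℕ) :
    ltrims a = if ltrim a = 0 then ∅ else insert (ltrim a) (ltrims (ltrim a)) := by
  rw [ltrims]; split <;> rfl

lemma mem_ltrims_self {a : ℕ} (h : ltrim a ≠ 0) : ltrim a ∈ ltrims a := by
  rw [ltrims_eq]; simp [h]

lemma ltrims_step_subset {a : ℕ} (h : ltrim a ≠ 0) : ltrims (ltrim a) ⊆ ltrims a := by
  intro x hx; rw [ltrims_eq]; simp [h, Finset.mem_insert]; right; exact hx

lemma ltrim_lt_self {b : ℕ} (hb : 1 ≤ b) : ltrim b < b := by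
  have := lpow_pos b; unfold ltrim; omega

lemma ltrims_trans : ∀ b x, x ∈ ltrims b → ltrims x ⊆ ltrims b := by
  intro b
  induction b using Nat.strong_induction_on with
  | _ b IH =>
    intro x hx
    rw [ltrims_eq] at hx
    by_cases h0 : ltrim b = 0
    · simp [h0] at hx
    · simp [h0, Finset.mem_insert] at hx
      have hb1 : 1 ≤ b := by
        by_contra hb; push_neg at hb
        interval_cases b
        · simp [ltrim, lpow] at h0
      rcases hx with rfl | hx
      · exact ltrims_step_subset h0
      · exact (IH (ltrim b) (ltrim_lt_self hb1) x hx).trans (ltrims_step_subset h0)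

lemma mem_ltrims_pos : ∀ b x, x ∈ ltrims b → 1 ≤ x := by
  intro b
  induction b using Nat.strong_induction_on with
  | _ b IH =>
    intro x hx
    rw [ltrims_eq] at hx
    by_cases h0 : ltrim b = 0
    · simp [h0] at hx
    · simp [h0, Finset.mem_insert] at hx
      have hb1 : 1 ≤ b := by
        by_contra hb; push_neg at hb
        interval_cases b
        · simp [ltrim, lpow] at h0
      rcases hx with rfl | hx
      · omega
      · exact IH (ltrim b) (ltrim_lt_self hb1) x hx

lemma ltrim_mem_ltrims_of_mem {b x : ℕ} (hx : x ∈ ltrims b) (h : ltrim x ≠ 0) :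
    ltrim x ∈ ltrims b :=
  ltrims_trans b x hx (mem_ltrims_self h)

/-- The chain lemma: adding a "small" power of two to `b`, if the result jumps past
`2 * lpow b`, the new `ltrim` is trivial or in the `ltrim`-chain of `b`. -/
lemma chain_ltrim : ∀ b, 1 ≤ b → ∀ a, 2 ^ a ≤ lpow b → 2 * lpow b ≤ 2 ^ a + b →
    ltrim (2 ^ a + b) = 0 ∨ isPow (ltrim (2 ^ a + b)) ∨ ltrim (2 ^ a + b) ∈ ltrims b := by
  intro b
  induction b using Nat.strong_induction_on with
  | _ b IH =>
    intro hb a ha hge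
    rcases eq_or_lt_of_le ha with heq | hlt
    · -- 2 ^ a = lpow b
      by_cases hp : isPow b
      · left
        have hfb : lpow b = b := lpow_eq_self_of hp
        have : 2 ^ a + b = 2 * lpow b := by omega
        rw [this]
        have : 2 * lpow b = 2 ^ (Nat.log 2 b + 1) := by
          have : lpow b = 2 ^ Nat.log 2 b := rfl
          rw [pow_succ]; omega
        rw [this]
        have := lpow_two_pow (Nat.log 2 b + 1)
        unfold ltrim
        omega
      · right; right
        have h3 := lpow_add_lpow hb hp
        have : 2 ^ a + b = lpow b + b := by omega
        rw [this, h3.2]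
        exact mem_ltrims_self (by have := ltrim_pos_of hb hp; omega)
    · -- 2 ^ a < lpow b
      set f := Nat.log 2 b with hf
      have hfb : lpow b = 2 ^ f := rfl
      have hp : ¬ isPow b := by
        intro hp
        have : lpow b = b := lpow_eq_self_of hp
        omega
      have hb' := ltrim_pos_of hb hp
      set b' := ltrim b with hb'def
      have hsplit : b = 2 ^ f + b' := by
        have := lpow_add_ltrim hb; rw [hfb] at this; omega
      have hflt : a < f := by
        rw [hfb] at hlt
        exact (Nat.pow_lt_pow_iff_right (by norm_num)).mp hlt
      have hf1 : 1 ≤ f := by omega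
      have hfs : (2:ℕ) ^ f = 2 * 2 ^ (f - 1) := by
        rw [← pow_succ']; congr 1; omega
      have haf : (2:ℕ) ^ a ≤ 2 ^ (f - 1) := Nat.pow_le_pow_right (by norm_num) (by omega)
      have hb'lt : b' < 2 ^ f := by
        have := ltrim_lt_lpow hb; rw [hfb] at this; omega
      have hb'ge : 2 ^ (f - 1) ≤ b' := by rw [hfb] at hge; omega
      have hlpb' : lpow b' = 2 ^ (f - 1) := by
        apply lpow_eq_of hb'ge
        have : f - 1 + 1 = f := by omega
        rw [this]; exact hb'lt
      -- lpow (2^a + b) = 2^(f+1)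
      have hps : (2:ℕ) ^ (f + 1) = 2 * 2 ^ f := by rw [pow_succ]; ring
      have hps2 : (2:ℕ) ^ (f + 1 + 1) = 4 * 2 ^ f := by ring
      have e1 : 2 ^ (f + 1) ≤ 2 ^ a + b := by rw [hfb] at hge; omega
      have e2 : 2 ^ a + b < 2 ^ (f + 1 + 1) := by rw [hps2]; omega
      have htc : ltrim (2 ^ a + b) = 2 ^ a + b' - 2 ^ f := by
        rw [ltrim_eq_of e1 e2, hps]; omega
      -- equals ltrim (2^a + b')
      have e1' : 2 ^ (f - 1 + 1) ≤ 2 ^ a + b' := by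
        have : f - 1 + 1 = f := by omega
        rw [this, hfb] at *; omega
      have e2' : 2 ^ a + b' < 2 ^ (f - 1 + 1 + 1) := by
        have h9 : f - 1 + 1 = f := by omega
        rw [h9, hps]; omega
      have htc' : ltrim (2 ^ a + b') = 2 ^ a + b' - 2 ^ f := by
        rw [ltrim_eq_of e1' e2']
        have : f - 1 + 1 = f := by omega
        rw [this]
      have heqt : ltrim (2 ^ a + b) = ltrim (2 ^ a + b') := by omega
      have hIHa : 2 ^ a ≤ lpow b' := by rw [hlpb']; exact haf
      have hIHb : 2 * lpow b' ≤ 2 ^ a + b' := by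
        rw [hlpb']
        have h9 : f - 1 + 1 = f := by omega
        rw [h9] at e1'
        omega
      have hIH := IH b' (ltrim_lt_self hb) (by omega) a hIHa hIHb
      rw [heqt]
      rcases hIH with h | h | h
      · exact Or.inl h
      · exact Or.inr (Or.inl h)
      · exact Or.inr (Or.inr (Finset.mem_of_subset (ltrims_trans b b' (mem_ltrims_self (by omega))) h))

section BsetLemmas
variable (ta : ℕ → ℕ) (n : ℕ)

lemma Bset_two (j : ℕ) : Bset ta n (j + 2) =
    (insert (ta (j + 2)) (insert (ta (j + 1) + ta (j + 2))
      (((Finset.range n).image fun i => 2 ^ i + ta (j + 2)) ∪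
        ((Bset ta n (j + 1)).image fun b => b + ta (j + 2))))).biUnion ltrims := by
  rw [Bset]

lemma ltrims_subset_Bset {y : ℕ} {j : ℕ}
    (hy : y ∈ insert (ta (j + 2)) (insert (ta (j + 1) + ta (j + 2))
      (((Finset.range n).image fun i => 2 ^ i + ta (j + 2)) ∪
        ((Bset ta n (j + 1)).image fun b => b + ta (j + 2))))) :
    ltrims y ⊆ Bset ta n (j + 2) := by
  intro x hx
  rw [Bset_two]
  exact Finset.mem_biUnion.mpr ⟨y, hy, hx⟩

lemma Bse1 {x j : ℕ} (hx : x ∈ ltrims (ta (j + 2))) : x ∈ Bset ta n (j + 2) :=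
  ltrims_subset_Bset ta n (Finset.mem_insert_self _ _) hx

lemma Bse2 {x j : ℕ} (hx : x ∈ ltrims (ta (j + 1) + ta (j + 2))) : x ∈ Bset ta n (j + 2) :=
  ltrims_subset_Bset ta n
    (Finset.mem_insert_of_mem (Finset.mem_insert_self _ _)) hx

lemma Bse3 {x j i : ℕ} (hi : i < n) (hx : x ∈ ltrims (2 ^ i + ta (j + 2))) :
    x ∈ Bset ta n (j + 2) :=
  ltrims_subset_Bset ta n
    (Finset.mem_insert_of_mem (Finset.mem_insert_of_mem (Finset.mem_union_left _
      (Finset.mem_image.mpr ⟨i, Finset.mem_range.mpr hi, rfl⟩)))) hx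

lemma Bse4 {x j b : ℕ} (hb : b ∈ Bset ta n (j + 1)) (hx : x ∈ ltrims (b + ta (j + 2))) :
    x ∈ Bset ta n (j + 2) :=
  ltrims_subset_Bset ta n
    (Finset.mem_insert_of_mem (Finset.mem_insert_of_mem (Finset.mem_union_right _
      (Finset.mem_image.mpr ⟨b, hb, rfl⟩)))) hx

lemma Bset_closed {x j : ℕ} (hx : x ∈ Bset ta n j) : ltrims x ⊆ Bset ta n j := by
  match j with
  | 0 => simp [Bset] at hx
  | 1 =>
    have : Bset ta n 1 = ltrims (ta 1) := by rw [Bset]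
    rw [this] at hx ⊢
    exact ltrims_trans _ _ hx
  | (j + 2) =>
    rw [Bset_two] at hx
    obtain ⟨y, hy, hxy⟩ := Finset.mem_biUnion.mp hx
    exact (ltrims_trans _ _ hxy).trans (ltrims_subset_Bset ta n hy)

lemma Bset_mem_pos {x j : ℕ} (hx : x ∈ Bset ta n j) : 1 ≤ x := by
  match j with
  | 0 => simp [Bset] at hx
  | 1 =>
    have : Bset ta n 1 = ltrims (ta 1) := by rw [Bset]
    rw [this] at hx
    exact mem_ltrims_pos _ _ hx
  | (j + 2) =>
    rw [Bset_two] at hx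
    obtain ⟨y, _, hxy⟩ := Finset.mem_biUnion.mp hx
    exact mem_ltrims_pos _ _ hxy

end BsetLemmas
/-! ### List infrastructure -/

lemma dyLen_le_length (l : List ℕ) : dyLen l ≤ l.length :=
  (List.takeWhile_sublist _).length_le

lemma dyLen_cons_pos (a : ℕ) (l : List ℕ) (h : isPow a) :
    dyLen (a :: l) = dyLen l + 1 := by
  unfold dyLen
  rw [List.takeWhile_cons_of_pos (by simpa [beq_iff_eq, isPow] using h)]
  simp

lemma dyLen_cons_neg (a : ℕ) (l : List ℕ) (h : ¬ isPow a) :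
    dyLen (a :: l) = 0 := by
  unfold dyLen
  rw [List.takeWhile_cons_of_neg (by simpa [beq_iff_eq, isPow] using h)]
  simp

lemma pow_of_lt_dyLen : ∀ {l : List ℕ} {m : ℕ}, m < dyLen l → isPow (l.getD m 0) := by
  intro l
  induction l with
  | nil => intro m h; simp [dyLen] at h
  | cons a l IH =>
    intro m h
    by_cases ha : isPow a
    · rw [dyLen_cons_pos a l ha] at h
      cases m with
      | zero => simpa using ha
      | succ m => simpa using IH (by omega)
    · rw [dyLen_cons_neg a l ha] at h; omega

lemma not_pow_dyLen : ∀ {l : List ℕ}, dyLen l < l.length → ¬ isPow (l.getD (dyLen l) 0) := by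
  intro l
  induction l with
  | nil => intro h; simp at h
  | cons a l IH =>
    intro h
    by_cases ha : isPow a
    · rw [dyLen_cons_pos a l ha] at h ⊢
      simpa using IH (by simpa using h)
    · rw [dyLen_cons_neg a l ha] at h ⊢
      simpa using ha

lemma le_dyLen_of {l : List ℕ} {k : ℕ} (hk : k ≤ l.length)
    (hp : ∀ m, m < k → isPow (l.getD m 0)) : k ≤ dyLen l := by
  by_contra h
  push_neg at h
  exact not_pow_dyLen (by omega) (hp _ h)

lemma dyLen_le_of_not {l : List ℕ} {k : ℕ} (hk : k < l.length)
    (h : ¬ isPow (l.getD k 0)) : dyLen l ≤ k := by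
  by_contra hc
  push_neg at hc
  exact h (pow_of_lt_dyLen hc)

lemma dyLen_eq_of {l : List ℕ} {k : ℕ} (hk : k < l.length)
    (hp : ∀ m, m < k → isPow (l.getD m 0)) (h : ¬ isPow (l.getD k 0)) : dyLen l = k :=
  le_antisymm (dyLen_le_of_not hk h) (le_dyLen_of (le_of_lt hk) hp)

lemma fd_iff_allpow {l : List ℕ} :
    fullyDyadic l ↔ ∀ m, m < l.length → isPow (l.getD m 0) := by
  constructor
  · intro h m hm
    exact pow_of_lt_dyLen (by rw [fullyDyadic] at h; omega)
  · intro h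
    exact le_antisymm (dyLen_le_length l) (le_dyLen_of le_rfl h)

lemma getD_mem {l : List ℕ} {m : ℕ} (h : m < l.length) : l.getD m 0 ∈ l := by
  rw [List.getD_eq_getElem l 0 h]
  exact List.getElem_mem _

lemma getD_take {l : List ℕ} {k m : ℕ} (h : m < k) :
    (l.take k).getD m 0 = l.getD m 0 := by
  rw [List.getD_eq_getElem?_getD, List.getD_eq_getElem?_getD, List.getElem?_take, if_pos h]

lemma getD_drop (l : List ℕ) (k m : ℕ) :
    (l.drop k).getD m 0 = l.getD (k + m) 0 := by
  simp [List.getD_eq_getElem?_getD, List.getElem?_drop]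

lemma eq_take_cons_drop {l : List ℕ} {q : ℕ} (h : q < l.length) :
    l = l.take q ++ l.getD q 0 :: l.drop (q + 1) := by
  conv_lhs => rw [← List.take_append_drop q l]
  rw [List.drop_eq_getElem_cons h, List.getD_eq_getElem l 0 h]

lemma mem_take_sub {l : List ℕ} {k : ℕ} {x : ℕ} (h : x ∈ l.take k) : x ∈ l :=
  (List.take_sublist k l).mem h

lemma mem_drop_sub {l : List ℕ} {k : ℕ} {x : ℕ} (h : x ∈ l.drop k) : x ∈ l :=
  (List.drop_sublist k l).mem h

lemma le_foldrMax {l : List ℕ} {x : ℕ} (h : x ∈ l) : x ≤ l.foldr max 0 := by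
  induction l with
  | nil => simp at h
  | cons a l IH =>
    rcases List.mem_cons.mp h with rfl | h
    · simp [le_max_iff]
    · simp only [List.foldr_cons, le_max_iff]
      exact Or.inr (IH h)

lemma exists_of_lt_foldrMax {l : List ℕ} {a : ℕ} (h : a < l.foldr max 0) :
    ∃ x ∈ l, a < x := by
  induction l with
  | nil => simp only [List.foldr_nil] at h; exact absurd h (by omega)
  | cons b l IH =>
    simp only [List.foldr_cons, lt_max_iff] at h
    rcases h with h | h
    · exact ⟨b, List.mem_cons_self, h⟩
    · obtain ⟨x, hx, hax⟩ := IH h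
      exact ⟨x, List.mem_cons_of_mem _ hx, hax⟩

lemma getD_mem_take {l : List ℕ} {m k : ℕ} (hm : m < k) (hml : m < l.length) :
    l.getD m 0 ∈ l.take k := by
  rw [← getD_take hm]
  exact getD_mem (by simp; omega)

lemma mem_le_sum {l : List ℕ} {x : ℕ} (h : x ∈ l) : x ≤ l.sum :=
  List.single_le_sum (fun _ _ => Nat.zero_le _) _ h

lemma sum_lt_two_pow_sizeL (l : List ℕ) : l.sum < 2 ^ sizeL l := by
  induction l with
  | nil => simp [sizeL]
  | cons a l IH =>
    have hs : sizeL (a :: l) = (1 + Nat.log 2 (a + 1)) + sizeL l := by simp [sizeL]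
    rw [hs, pow_add]
    have ha : a + 1 < 2 ^ (Nat.log 2 (a + 1) + 1) :=
      Nat.lt_pow_succ_log_self (by norm_num) _
    have ha' : a + 1 < 2 ^ (1 + Nat.log 2 (a + 1)) := by rwa [add_comm 1]
    have hA : (2:ℕ) ≤ 2 ^ (1 + Nat.log 2 (a + 1)) := by
      calc (2:ℕ) = 2 ^ 1 := rfl
      _ ≤ _ := Nat.pow_le_pow_right (by norm_num) (by omega)
    set A := 2 ^ (1 + Nat.log 2 (a + 1))
    set S := 2 ^ sizeL l with hS
    have hS1 : 1 ≤ S := Nat.pow_pos (by norm_num)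
    simp only [List.sum_cons]
    rcases eq_or_lt_of_le hS1 with h1 | h2
    · have h0 : l.sum = 0 := by omega
      rw [h0, ← h1, mul_one]
      omega
    · have := Nat.add_le_mul hA h2
      omega

lemma elem_lt_two_pow {l : List ℕ} {x : ℕ} (h : x ∈ l) : x < 2 ^ sizeL l :=
  lt_of_le_of_lt (mem_le_sum h) (sum_lt_two_pow_sizeL l)

lemma pow_lt_sizeL {l : List ℕ} {a : ℕ} (h : 2 ^ a < 2 ^ sizeL l) : a < sizeL l :=
  (Nat.pow_lt_pow_iff_right (by norm_num)).mp h
/-! ### The invariant -/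

/-- The inductive invariant for non-fully-dyadic reachable targets. -/
def NInv (tt t : List ℕ) : Prop :=
  posL t ∧ t.length = tt.length ∧ t.sum ≤ tt.sum ∧ 1 ≤ dyLen t ∧ dyLen t < t.length ∧
  ¬ srcA t ∧
  (∀ i, dyLen t + 1 ≤ i → i < t.length → t.getD i 0 = tt.getD i 0) ∧
  (t.getD (dyLen t) 0 = tt.getD (dyLen t) 0 ∨
    (t.getD (dyLen t) 0 < (t.take (dyLen t)).foldr max 0 ∧
      t.getD (dyLen t) 0 ∈ Bset (fun j => tt.getD (j - 1) 0) (sizeL tt) (dyLen t + 1)))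

def BInv (tt t : List ℕ) : Prop := fullyDyadic t ∨ NInv tt t

/-! ### Structure of `VbcA` -/

section VbcAStruct

variable {σ : List ℕ}

lemma VbcA_eq (σ : List ℕ) :
    VbcA σ = σ.take (dyLen σ) ++ lpow (σ.getD (dyLen σ) 0) ::
      ltrim (σ.getD (dyLen σ) 0) :: σ.drop (dyLen σ + 1) := by
  simp [VbcA]

lemma VbcA_length (hd : dyLen σ < σ.length) : (VbcA σ).length = σ.length + 1 := by
  rw [VbcA_eq]
  simp
  omega

lemma VbcA_getD_lt {m : ℕ} (hm : m < dyLen σ) :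
    (VbcA σ).getD m 0 = σ.getD m 0 := by
  rw [VbcA_eq, List.getD_append _ _ _ _ (by simp; have := dyLen_le_length σ; omega)]
  exact getD_take hm

lemma VbcA_getD_bp (hd : dyLen σ < σ.length) :
    (VbcA σ).getD (dyLen σ) 0 = lpow (σ.getD (dyLen σ) 0) := by
  rw [VbcA_eq, List.getD_append_right _ _ _ _ (by simp only [List.length_take]; omega)]
  have : dyLen σ - (σ.take (dyLen σ)).length = 0 := by simp only [List.length_take]; omega
  rw [this]
  simp

lemma VbcA_getD_bp1 (hd : dyLen σ < σ.length) :
    (VbcA σ).getD (dyLen σ + 1) 0 = ltrim (σ.getD (dyLen σ) 0) := by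
  rw [VbcA_eq, List.getD_append_right _ _ _ _ (by simp only [List.length_take]; omega)]
  have : dyLen σ + 1 - (σ.take (dyLen σ)).length = 1 := by
    simp only [List.length_take]; omega
  rw [this]
  simp

lemma VbcA_getD_ge {m : ℕ} (hd : dyLen σ < σ.length) (hm : dyLen σ + 2 ≤ m) :
    (VbcA σ).getD m 0 = σ.getD (m - 1) 0 := by
  rw [VbcA_eq, List.getD_append_right _ _ _ _ (by simp only [List.length_take]; omega)]
  have h1 : (σ.take (dyLen σ)).length = dyLen σ := by
    simp only [List.length_take]; omega
  rw [h1]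
  have h2 : m - dyLen σ = (m - dyLen σ - 2) + 2 := by omega
  rw [h2]
  simp only [List.getD_cons_succ]
  rw [getD_drop]
  congr 1
  omega

lemma VbcA_sum (hd : dyLen σ < σ.length) (hc : 1 ≤ σ.getD (dyLen σ) 0) :
    (VbcA σ).sum = σ.sum := by
  conv_rhs => rw [eq_take_cons_drop hd]
  rw [VbcA_eq]
  simp only [List.sum_append, List.sum_cons]
  have := lpow_add_ltrim hc
  omega

lemma VbcA_posL (hd : dyLen σ < σ.length) (hσ : posL σ)
    (hnp : ¬ isPow (σ.getD (dyLen σ) 0)) : posL (VbcA σ) := by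
  intro x hx
  rw [VbcA_eq] at hx
  simp only [List.mem_append, List.mem_cons] at hx
  rcases hx with hx | rfl | rfl | hx
  · exact hσ x (mem_take_sub hx)
  · exact lpow_pos _
  · exact ltrim_pos_of (hσ _ (getD_mem hd)) hnp
  · exact hσ x (mem_drop_sub hx)

lemma VbcA_take_pow (hd : dyLen σ < σ.length) {m : ℕ} (hm : m ≤ dyLen σ) :
    ∀ i, i < m + 1 → isPow ((VbcA σ).getD i 0) := by
  intro i hi
  rcases Nat.lt_or_ge i (dyLen σ) with h | h
  · rw [VbcA_getD_lt h]; exact pow_of_lt_dyLen h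
  · have : i = dyLen σ := by omega
    rw [this, VbcA_getD_bp hd]
    exact isPow_lpow _

end VbcAStruct

/-! ### `faceN` -/

lemma faceN_middle {l : List ℕ} {i : ℕ} (h0 : i ≠ 0) (hl : i ≠ l.length) :
    faceN i l = l.take (i - 1) ++ (l.getD (i - 1) 0 + l.getD i 0) :: l.drop (i + 1) := by
  simp [faceN, h0, hl]

/-! ### Fully dyadic absorbing facts -/

lemma srcB_fd {σ : List ℕ} (h : srcB σ) : fullyDyadic (VbcB σ) := by
  obtain ⟨hfd, hne, _, _, h2⟩ := h
  rw [fd_iff_allpow] at hfd ⊢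
  have hlen : 1 ≤ σ.length := List.length_pos_iff.mpr hne
  have hlast : isPow (σ.getD (σ.length - 1) 0) := hfd _ (by omega)
  obtain ⟨k, hk⟩ : ∃ k, σ.getD (σ.length - 1) 0 = 2 ^ k := ⟨_, hlast⟩
  have hk1 : 1 ≤ k := by
    rcases Nat.eq_zero_or_pos k with h0 | h0
    · rw [h0, pow_zero] at hk; omega
    · exact h0
  have hl2 : isPow (σ.getD (σ.length - 1) 0 / 2) := by
    have h9 : k = (k - 1) + 1 := by omega
    rw [hk, h9, pow_succ, Nat.mul_div_cancel _ (by norm_num : 0 < 2)]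
    exact isPow_two_pow _
  have hall : ∀ x ∈ VbcB σ, isPow x := by
    intro x hx
    unfold VbcB at hx
    rcases List.mem_append.mp hx with hx | hx
    · have hxσ : x ∈ σ := (List.dropLast_sublist σ).mem hx
      obtain ⟨j, hj, rfl⟩ := List.mem_iff_getElem.mp hxσ
      have := hfd j hj
      rwa [List.getD_eq_getElem _ 0 hj] at this
    · simp only [List.mem_cons, List.not_mem_nil, or_false] at hx
      rcases hx with rfl | rfl <;> exact hl2
  exact fun m hm => hall _ (getD_mem hm)
/-! ### getD/length/sum of faces -/

section FaceStruct
variable {τ : List ℕ} {i m : ℕ}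

lemma face_zero (τ : List ℕ) : faceN 0 τ = τ.tail := by simp [faceN]

lemma face_last (τ : List ℕ) (h : τ.length ≠ 0) : faceN τ.length τ = τ.dropLast := by
  simp [faceN, h]

lemma tail_getD (τ : List ℕ) (m : ℕ) : τ.tail.getD m 0 = τ.getD (m + 1) 0 := by
  rw [← List.drop_one, getD_drop]
  congr 1
  omega

lemma sum_take_add_drop (l : List ℕ) (k : ℕ) : (l.take k).sum + (l.drop k).sum = l.sum := by
  conv_rhs => rw [← List.take_append_drop k l]
  rw [List.sum_append]

lemma face_middle_length (h0 : i ≠ 0) (hl : i ≠ τ.length) (hil : i ≤ τ.length) :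
    (faceN i τ).length = τ.length - 1 := by
  rw [faceN_middle h0 hl]
  simp only [List.length_append, List.length_cons, List.length_take, List.length_drop]
  omega

lemma face_middle_getD_lt (h0 : i ≠ 0) (hl : i ≠ τ.length) (hil : i ≤ τ.length)
    (hm : m < i - 1) : (faceN i τ).getD m 0 = τ.getD m 0 := by
  rw [faceN_middle h0 hl, List.getD_append _ _ _ _ (by simp only [List.length_take]; omega)]
  exact getD_take hm

lemma face_middle_getD_eq (h0 : i ≠ 0) (hl : i ≠ τ.length) (hil : i ≤ τ.length) :
    (faceN i τ).getD (i - 1) 0 = τ.getD (i - 1) 0 + τ.getD i 0 := by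
  rw [faceN_middle h0 hl, List.getD_append_right _ _ _ _ (by simp only [List.length_take]; omega)]
  have : i - 1 - (τ.take (i - 1)).length = 0 := by simp only [List.length_take]; omega
  rw [this]
  simp

lemma face_middle_getD_gt (h0 : i ≠ 0) (hl : i ≠ τ.length) (hil : i ≤ τ.length) (hm : i ≤ m) :
    (faceN i τ).getD m 0 = τ.getD (m + 1) 0 := by
  rw [faceN_middle h0 hl, List.getD_append_right _ _ _ _ (by simp only [List.length_take]; omega)]
  have h1 : (τ.take (i - 1)).length = i - 1 := by simp only [List.length_take]; omega
  rw [h1]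
  have h2 : m - (i - 1) = (m - i) + 1 := by omega
  rw [h2]
  simp only [List.getD_cons_succ]
  rw [getD_drop]
  congr 1
  omega

lemma face_middle_sum (h0 : i ≠ 0) (hl : i ≠ τ.length) (hil : i ≤ τ.length) :
    (faceN i τ).sum = τ.sum := by
  have hi1 : i - 1 < τ.length := by omega
  have hi : i < τ.length := by omega
  rw [faceN_middle h0 hl]
  conv_rhs => rw [eq_take_cons_drop hi1]
  simp only [List.sum_append, List.sum_cons]
  have hdd : τ.drop (i - 1 + 1) = τ.getD i 0 :: τ.drop (i + 1) := by
    have h9 : i - 1 + 1 = i := by omega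
    rw [h9, List.drop_eq_getElem_cons hi, List.getD_eq_getElem τ 0 hi]
  rw [hdd]
  simp only [List.sum_cons]
  omega

end FaceStruct

/-! ### The key assembling lemma -/

lemma KEY {tt τ : List ℕ} {k : ℕ}
    (hkl : k < τ.length)
    (hA : ∀ m, m < k → isPow (τ.getD m 0))
    (hdesc : ∃ j, j + 1 ≤ k ∧ τ.getD (j + 1) 0 < τ.getD j 0)
    (hraw : ∀ m, k + 1 ≤ m → m < τ.length → τ.getD m 0 = tt.getD m 0)
    (hbp : ¬ isPow (τ.getD k 0) → (τ.getD k 0 = tt.getD k 0 ∨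
        (τ.getD k 0 < (τ.take k).foldr max 0 ∧
         τ.getD k 0 ∈ Bset (fun j => tt.getD (j - 1) 0) (sizeL tt) (k + 1))))
    (hpos : posL τ) (hlen : τ.length = tt.length) (hsum : τ.sum ≤ tt.sum) :
    BInv tt τ := by
  by_cases hfd : fullyDyadic τ
  · exact Or.inl hfd
  right
  have hk : k ≤ dyLen τ := le_dyLen_of (le_of_lt hkl) hA
  have hql := dyLen_le_length τ
  have hq : dyLen τ < τ.length := by
    unfold fullyDyadic at hfd
    omega
  obtain ⟨j, hj1, hj2⟩ := hdesc
  refine ⟨hpos, hlen, hsum, by omega, hq, ?_, ?_, ?_⟩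
  · rintro ⟨h1, h2, h3⟩
    rcases lt_or_eq_of_le (show j + 1 ≤ dyLen τ by omega) with h | h
    · exact absurd (h2 j h) (by omega)
    · have := h3 j h
      rw [← h] at this
      omega
  · intro i hi1 hi2
    exact hraw i (by omega) hi2
  · rcases lt_or_eq_of_le hk with h | h
    · exact Or.inl (hraw _ (by omega) hq)
    · rw [← h]
      exact hbp (h ▸ not_pow_dyLen hq)

/-! ### Fully dyadic is absorbing -/

lemma mem_take_dyLen_pow {l : List ℕ} {x : ℕ} {k : ℕ} (hk : k ≤ dyLen l)
    (h : x ∈ l.take k) : isPow x := by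
  obtain ⟨m, hm, rfl⟩ := List.mem_iff_getElem.mp h
  have hml : m < l.length := by
    have : (l.take k).length = min k l.length := List.length_take
    simp at hm
    omega
  have : (l.take k)[m] = (l.take k).getD m 0 := (List.getD_eq_getElem _ 0 hm).symm
  rw [this, getD_take (by simp at hm; omega)]
  exact pow_of_lt_dyLen (by simp at hm; omega)

lemma absorb {τ σ : List ℕ} {i : ℕ} (hfd : fullyDyadic τ) (hi : i ≤ τ.length)
    (hface : σ = faceN i τ) (hsrc : srcA σ) : fullyDyadic (VbcA σ) := by
  have hτ := fd_iff_allpow.mp hfd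
  obtain ⟨hd, _, _⟩ := hsrc
  have hnp := not_pow_dyLen hd
  -- σ cannot be all-powers
  by_cases hall : ∀ m, m < σ.length → isPow (σ.getD m 0)
  · exact absurd (hall _ hd) hnp
  -- so i is a middle face and the merged entry is the breakpoint
  push_neg at hall
  have h0 : i ≠ 0 := by
    rintro rfl
    obtain ⟨m, hm, hmp⟩ := hall
    rw [hface] at hm hmp
    rw [face_zero] at hm hmp
    rw [tail_getD] at hmp
    exact hmp (hτ _ (by simp at hm; omega))
  have hl : i ≠ τ.length := by
    rintro rfl
    obtain ⟨m, hm, hmp⟩ := hall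
    rw [hface, face_last _ (by omega)] at hm hmp
    rw [List.dropLast_eq_take, getD_take (by simp at hm; omega)] at hmp
    exact hmp (hτ _ (by simp at hm; omega))
  -- merged value
  set x := τ.getD (i - 1) 0 with hx
  set y := τ.getD i 0 with hy
  have hxp : isPow x := hτ _ (by omega)
  have hyp : isPow y := hτ _ (by omega)
  obtain ⟨e1, he1⟩ : ∃ e, x = 2 ^ e := ⟨_, hxp⟩
  obtain ⟨e2, he2⟩ : ∃ e, y = 2 ^ e := ⟨_, hyp⟩
  have hlenσ : σ.length = τ.length - 1 := by rw [hface]; exact face_middle_length h0 hl hi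
  -- any entry of σ is a power except possibly at i - 1
  have hσm : ∀ m, m < σ.length → m ≠ i - 1 → isPow (σ.getD m 0) := by
    intro m hm hne
    rcases Nat.lt_or_ge m (i - 1) with h | h
    · rw [hface, face_middle_getD_lt h0 hl hi h]
      exact hτ _ (by omega)
    · have him : i ≤ m := by omega
      rw [hface, face_middle_getD_gt h0 hl hi him]
      exact hτ _ (by omega)
  have hσi : σ.getD (i - 1) 0 = x + y := by
    rw [hface]; exact face_middle_getD_eq h0 hl hi
  -- the merged entry is not a power, and it is the breakpoint
  have hie : dyLen σ = i - 1 := by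
    by_contra hne
    exact hnp (hσm _ hd hne)
  have hxy : ¬ isPow (x + y) := by rw [← hσi, ← hie]; exact hnp
  have hee : e1 ≠ e2 := by
    rintro rfl
    apply hxy
    rw [he1, he2, ← two_mul, ← pow_succ']
    exact isPow_two_pow _
  have hlt : isPow (lpow (x + y)) ∧ isPow (ltrim (x + y)) := by
    rcases Nat.lt_or_ge e1 e2 with h | h
    · have := lpow_add_pow_lt h
      rw [he1, he2, add_comm, this.1, this.2]
      exact ⟨isPow_two_pow _, isPow_two_pow _⟩
    · have h' : e2 < e1 := by omega
      have := lpow_add_pow_lt h'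
      rw [he1, he2, this.1, this.2]
      exact ⟨isPow_two_pow _, isPow_two_pow _⟩
  -- now VbcA σ is all powers
  rw [fd_iff_allpow]
  intro m hm
  rw [VbcA_length hd] at hm
  rcases Nat.lt_or_ge m (dyLen σ) with h | h
  · rw [VbcA_getD_lt h]
    exact pow_of_lt_dyLen h
  rcases Nat.lt_or_ge m (dyLen σ + 1) with h2 | h2
  · have : m = dyLen σ := by omega
    rw [this, VbcA_getD_bp hd, hie, hσi]
    exact hlt.1
  rcases Nat.lt_or_ge m (dyLen σ + 2) with h3 | h3
  · have : m = dyLen σ + 1 := by omega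
    rw [this, VbcA_getD_bp1 hd, hie, hσi]
    exact hlt.2
  · rw [VbcA_getD_ge hd h3]
    apply hσm _ (by omega)
    omega
/-! ### More helpers -/

lemma chain_le {l : List ℕ} {K : ℕ} (h : ∀ i, i + 1 < K → l.getD i 0 ≤ l.getD (i + 1) 0)
    {m m' : ℕ} (h1 : m ≤ m') (h2 : m' < K) : l.getD m 0 ≤ l.getD m' 0 := by
  induction m' with
  | zero => have : m = 0 := by omega
            rw [this]
  | succ m' IH =>
    rcases Nat.lt_or_ge m (m' + 1) with hlt | hge
    · exact le_trans (IH (by omega) (by omega)) (h m' h2)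
    · have : m = m' + 1 := by omega
      rw [this]

/-- From the breakpoint clause of the invariant, `ltrim b` is in `B_{q+1}`. -/
lemma bp_mem_of {tt t : List ℕ}
    (hq1 : 1 ≤ dyLen t) (hqlen : dyLen t < t.length)
    (hb1 : 1 ≤ t.getD (dyLen t) 0)
    (hbnp : ¬ isPow (t.getD (dyLen t) 0))
    (hbp : t.getD (dyLen t) 0 = tt.getD (dyLen t) 0 ∨
      (t.getD (dyLen t) 0 < (t.take (dyLen t)).foldr max 0 ∧
       t.getD (dyLen t) 0 ∈ Bset (fun j => tt.getD (j - 1) 0) (sizeL tt) (dyLen t + 1))) :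
    ltrim (t.getD (dyLen t) 0) ∈
      Bset (fun j => tt.getD (j - 1) 0) (sizeL tt) (dyLen t + 1) := by
  set q := dyLen t with hq
  set b := t.getD q 0 with hbdef
  have hl0 : ltrim b ≠ 0 := by have := ltrim_pos_of hb1 hbnp; omega
  rcases hbp with hrawb | ⟨_, hmem⟩
  · have h12 : q - 1 + 2 = q + 1 := by omega
    rw [← h12]
    apply Bse1 (fun j => tt.getD (j - 1) 0) (sizeL tt) (j := q - 1)
    have h14 : q - 1 + 2 - 1 = q := by omega
    have h13 : tt.getD (q - 1 + 2 - 1) 0 = b := by rw [h14, ← hrawb]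
    show ltrim b ∈ ltrims (tt.getD (q - 1 + 2 - 1) 0)
    rw [h13]
    exact mem_ltrims_self hl0
  · exact Bset_closed _ _ hmem (mem_ltrims_self hl0)

/-- Specialized form of `KEY` for the standard shape `VbcA σ`. -/
lemma KEY2 {tt σ : List ℕ}
    (hd : dyLen σ < σ.length)
    (hcnp : ¬ isPow (σ.getD (dyLen σ) 0))
    (hpos : posL σ)
    (hlen : σ.length + 1 = tt.length)
    (hsum : σ.sum ≤ tt.sum)
    (hraw : ∀ m, dyLen σ + 1 ≤ m → m < σ.length → σ.getD m 0 = tt.getD (m + 1) 0)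
    (hmem : ¬ isPow (ltrim (σ.getD (dyLen σ) 0)) →
        ltrim (σ.getD (dyLen σ) 0) ∈
          Bset (fun j => tt.getD (j - 1) 0) (sizeL tt) (dyLen σ + 2)) :
    BInv tt (VbcA σ) := by
  have hc1 : 1 ≤ σ.getD (dyLen σ) 0 := hpos _ (getD_mem hd)
  apply KEY (k := dyLen σ + 1)
  · rw [VbcA_length hd]; omega
  · exact VbcA_take_pow hd le_rfl
  · refine ⟨dyLen σ, le_rfl, ?_⟩
    rw [VbcA_getD_bp1 hd, VbcA_getD_bp hd]
    exact ltrim_lt_lpow hc1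
  · intro m hm hml
    rw [VbcA_length hd] at hml
    rw [VbcA_getD_ge hd hm]
    have h9 := hraw (m - 1) (by omega) (by omega)
    rw [h9]
    congr 1
    omega
  · intro hnp
    rw [VbcA_getD_bp1 hd] at hnp ⊢
    right
    constructor
    · have hmem2 : lpow (σ.getD (dyLen σ) 0) ∈ (VbcA σ).take (dyLen σ + 1) := by
        rw [← VbcA_getD_bp hd]
        exact getD_mem_take (by omega) (by rw [VbcA_length hd]; omega)
      exact lt_of_lt_of_le (ltrim_lt_lpow hc1) (le_foldrMax hmem2)
    · have h9 : dyLen σ + 1 + 1 = dyLen σ + 2 := by omega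
      rw [h9]
      exact hmem hnp
  · exact VbcA_posL hd hpos hcnp
  · rw [VbcA_length hd]; omega
  · rw [VbcA_sum hd hc1]; exact hsum
/-! ### Step cases -/

/-- If a face agrees with `t` on all indices `≤ dyLen t` and has the same `dyLen`,
then it being a type (a) source forces `t` to be one. -/
lemma srcA_transfer {t σ : List ℕ} (hqlen : dyLen t < t.length)
    (hdq : dyLen σ = dyLen t) (hag : ∀ m, m ≤ dyLen t → σ.getD m 0 = t.getD m 0)
    (hsrc : srcA σ) : srcA t := by
  obtain ⟨hd, hmono, hpeak⟩ := hsrc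
  rw [hdq] at hmono hpeak
  refine ⟨hqlen, ?_, ?_⟩
  · intro m hm
    have h1 := hmono m hm
    rwa [hag m (by omega), hag (m + 1) (by omega)] at h1
  · intro m hm
    have h1 := hpeak m hm
    rwa [hag m (by omega), hag (dyLen t) le_rfl] at h1

lemma stepA_zero {tt t : List ℕ} (hInv : NInv tt t) (hsrc : srcA t.tail) :
    BInv tt (VbcA t.tail) := by
  obtain ⟨hposT, hlenT, hsumT, hq1, hqlen, hnsrcA, hraw, hbp⟩ := hInv
  set q := dyLen t with hq
  have hbnp : ¬ isPow (t.getD q 0) := not_pow_dyLen hqlen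
  have hb1 : 1 ≤ t.getD q 0 := hposT _ (getD_mem hqlen)
  have hlent : t.tail.length = t.length - 1 := List.length_tail
  have hget : ∀ m, t.tail.getD m 0 = t.getD (m + 1) 0 := tail_getD t
  have hdq : dyLen t.tail = q - 1 := by
    apply dyLen_eq_of
    · omega
    · intro m hm
      rw [hget]
      exact pow_of_lt_dyLen (by omega)
    · rw [hget]
      have h9 : q - 1 + 1 = q := by omega
      rw [h9]
      exact hbnp
  have hcval : t.tail.getD (dyLen t.tail) 0 = t.getD q 0 := by
    rw [hdq, hget]
    congr 1
    omega
  apply KEY2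
  · rw [hdq, hlent]; omega
  · rw [hcval]; exact hbnp
  · intro x hx
    exact hposT x ((List.tail_sublist t).mem hx)
  · omega
  · have h9 := sum_take_add_drop t 1
    have : t.tail.sum = (t.drop 1).sum := by rw [List.drop_one]
    omega
  · intro m hm hml
    rw [hget]
    exact hraw (m + 1) (by omega) (by omega)
  · rw [hcval]
    intro hnp
    have h12 : dyLen t.tail + 2 = q + 1 := by omega
    rw [h12]
    exact bp_mem_of hq1 hqlen hb1 hbnp hbp

lemma stepA_last {tt t : List ℕ} (hInv : NInv tt t) (hlen0 : t.length ≠ 0)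
    (hsrc : srcA t.dropLast) : BInv tt (VbcA t.dropLast) := by
  obtain ⟨hposT, hlenT, hsumT, hq1, hqlen, hnsrcA, hraw, hbp⟩ := hInv
  set q := dyLen t with hq
  have hbnp : ¬ isPow (t.getD q 0) := not_pow_dyLen hqlen
  have hgd : ∀ m, m < t.length - 1 → t.dropLast.getD m 0 = t.getD m 0 := by
    intro m hm
    rw [List.dropLast_eq_take, getD_take hm]
  have hld : t.dropLast.length = t.length - 1 := by
    rw [List.dropLast_eq_take]
    simp only [List.length_take]
    omega
  rcases Nat.lt_or_ge q (t.length - 1) with hql | hql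
  · -- breakpoint survives: σ would make t a source, contradiction
    exfalso
    apply hnsrcA
    apply srcA_transfer hqlen _ _ hsrc
    · apply dyLen_eq_of
      · omega
      · intro m hm
        rw [hgd m (by omega)]
        exact pow_of_lt_dyLen hm
      · rw [hgd q (by omega)]
        exact hbnp
    · intro m hm
      exact hgd m (by omega)
  · -- σ is the all-powers prefix: cannot be a type (a) source
    exfalso
    obtain ⟨hd, _, _⟩ := hsrc
    apply not_pow_dyLen hd
    rw [hgd _ (by omega)]
    exact pow_of_lt_dyLen (by omega)
lemma stepA_right {tt t : List ℕ} {i : ℕ} (hInv : NInv tt t) (h0 : i ≠ 0)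
    (hlne : i ≠ t.length) (hilt : i < t.length) (hiq : dyLen t + 2 ≤ i)
    (hsrc : srcA (faceN i t)) : False := by
  obtain ⟨hposT, hlenT, hsumT, hq1, hqlen, hnsrcA, hraw, hbp⟩ := hInv
  set q := dyLen t with hq
  apply hnsrcA
  have hgd : ∀ m, m ≤ q → (faceN i t).getD m 0 = t.getD m 0 := fun m hm =>
    face_middle_getD_lt h0 hlne (le_of_lt hilt) (by omega)
  apply srcA_transfer hqlen _ hgd hsrc
  apply dyLen_eq_of
  · rw [face_middle_length h0 hlne (le_of_lt hilt)]; omega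
  · intro m hm; rw [hgd m (by omega)]; exact pow_of_lt_dyLen hm
  · rw [hgd q le_rfl]; exact not_pow_dyLen hqlen

lemma stepA_bpnext {tt t : List ℕ} (hInv : NInv tt t) (hlne : dyLen t + 1 ≠ t.length)
    (hilt : dyLen t + 1 < t.length) (hpos : posL (faceN (dyLen t + 1) t))
    (hsrc : srcA (faceN (dyLen t + 1) t)) : BInv tt (VbcA (faceN (dyLen t + 1) t)) := by
  obtain ⟨hposT, hlenT, hsumT, hq1, hqlen, hnsrcA, hraw, hbp⟩ := hInv
  set q := dyLen t with hq
  set σ := faceN (q + 1) t with hσ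
  have h0 : q + 1 ≠ 0 := by omega
  have hil : q + 1 ≤ t.length := by omega
  have hlenσ : σ.length = t.length - 1 := face_middle_length h0 hlne hil
  have hsumσ : σ.sum = t.sum := face_middle_sum h0 hlne hil
  have hglt : ∀ m, m < q → σ.getD m 0 = t.getD m 0 := by
    intro m hm; exact face_middle_getD_lt h0 hlne hil (by omega)
  have hgeq : σ.getD q 0 = t.getD q 0 + t.getD (q + 1) 0 := by
    have h1 := face_middle_getD_eq h0 hlne hil
    have h9 : q + 1 - 1 = q := by omega
    rw [h9] at h1
    exact h1
  have hggt : ∀ m, q + 1 ≤ m → σ.getD m 0 = t.getD (m + 1) 0 := by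
    intro m hm; exact face_middle_getD_gt h0 hlne hil hm
  have hrawq1 : t.getD (q + 1) 0 = tt.getD (q + 1) 0 := hraw _ (by omega) (by omega)
  by_cases hc0 : isPow (σ.getD q 0)
  · -- extended dyadic prefix; the breakpoint of σ is raw
    obtain ⟨hd, _, _⟩ := hsrc
    have hdge : q + 1 ≤ dyLen σ := by
      apply le_dyLen_of (by omega)
      intro m hm
      rcases Nat.lt_or_ge m q with h | h
      · rw [hglt m h]; exact pow_of_lt_dyLen h
      · have h9 : m = q := by omega
        rw [h9]; exact hc0
    have hrawσ : ∀ m, q + 1 ≤ m → m < σ.length → σ.getD m 0 = tt.getD (m + 1) 0 := by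
      intro m hm hml
      rw [hggt m hm]
      exact hraw (m + 1) (by omega) (by omega)
    apply KEY2 hd (not_pow_dyLen hd) hpos (by omega) (by omega)
    · intro m hm hml
      exact hrawσ m (by omega) hml
    · intro hnp
      have hdval : σ.getD (dyLen σ) 0 = tt.getD (dyLen σ + 1) 0 := hrawσ _ (by omega) hd
      have hl0 : ltrim (σ.getD (dyLen σ) 0) ≠ 0 := by
        have := ltrim_pos_of (hpos _ (getD_mem hd)) (not_pow_dyLen hd); omega
      apply Bse1 (fun j => tt.getD (j - 1) 0) (sizeL tt) (j := dyLen σ)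
      show ltrim _ ∈ ltrims (tt.getD (dyLen σ + 2 - 1) 0)
      have h9 : dyLen σ + 2 - 1 = dyLen σ + 1 := by omega
      rw [h9, ← hdval]
      exact mem_ltrims_self hl0
  · -- breakpoint of σ is b + t[q+1]
    have hdq : dyLen σ = q := by
      apply dyLen_eq_of (by omega)
      · intro m hm; rw [hglt m hm]; exact pow_of_lt_dyLen hm
      · exact hc0
    have hb1 : 1 ≤ t.getD q 0 := hposT _ (getD_mem hqlen)
    have hc1 : 1 ≤ σ.getD q 0 := by rw [hgeq]; omega
    have hl0 : ltrim (σ.getD q 0) ≠ 0 := by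
      have := ltrim_pos_of hc1 hc0; omega
    apply KEY2 (by omega) (by rw [hdq]; exact hc0) hpos (by omega) (by omega)
    · intro m hm hml
      rw [hggt m (by omega)]
      exact hraw (m + 1) (by omega) (by omega)
    · rw [hdq]
      intro hnp
      rcases hbp with hrawb | ⟨_, hmem⟩
      · apply Bse2 (fun j => tt.getD (j - 1) 0) (sizeL tt) (j := q)
        show ltrim _ ∈ ltrims (tt.getD (q + 1 - 1) 0 + tt.getD (q + 2 - 1) 0)
        have h9 : q + 1 - 1 = q := by omega
        have h10 : q + 2 - 1 = q + 1 := by omega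
        rw [h9, h10, ← hrawb, ← hrawq1, ← hgeq]
        exact mem_ltrims_self hl0
      · apply Bse4 (fun j => tt.getD (j - 1) 0) (sizeL tt) (j := q) hmem
        show ltrim _ ∈ ltrims (t.getD q 0 + tt.getD (q + 2 - 1) 0)
        have h10 : q + 2 - 1 = q + 1 := by omega
        rw [h10, ← hrawq1, ← hgeq]
        exact mem_ltrims_self hl0
lemma foldrMax_le {l : List ℕ} {M : ℕ} (h : ∀ x ∈ l, x ≤ M) : l.foldr max 0 ≤ M := by
  induction l with
  | nil => simp
  | cons a l IH =>
    simp only [List.foldr_cons, max_le_iff]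
    exact ⟨h a List.mem_cons_self, IH fun x hx => h x (List.mem_cons_of_mem _ hx)⟩

lemma exists_getD_of_mem_take {l : List ℕ} {k z : ℕ} (h : z ∈ l.take k) :
    ∃ m, m < k ∧ m < l.length ∧ z = l.getD m 0 := by
  obtain ⟨m, hm, rfl⟩ := List.mem_iff_getElem.mp h
  have hm' : m < k ∧ m < l.length := by
    simp only [List.length_take] at hm; omega
  refine ⟨m, hm'.1, hm'.2, ?_⟩
  rw [← getD_take hm'.1, List.getD_eq_getElem _ 0 hm]

lemma stepA_pre {tt t : List ℕ} {i : ℕ} (hInv : NInv tt t) (h0 : i ≠ 0)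
    (hiq : i < dyLen t) (hpos : posL (faceN i t))
    (hsrc : srcA (faceN i t)) : BInv tt (VbcA (faceN i t)) := by
  obtain ⟨hposT, hlenT, hsumT, hq1, hqlen, hnsrcA, hraw, hbp⟩ := hInv
  set q := dyLen t with hq
  set σ := faceN i t with hσ
  have hlne : i ≠ t.length := by omega
  have hil : i ≤ t.length := by omega
  have hbnp : ¬ isPow (t.getD q 0) := not_pow_dyLen hqlen
  have hb1 : 1 ≤ t.getD q 0 := hposT _ (getD_mem hqlen)
  have hlenσ : σ.length = t.length - 1 := face_middle_length h0 hlne hil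
  have hsumσ : σ.sum = t.sum := face_middle_sum h0 hlne hil
  have hglt : ∀ m, m < i - 1 → σ.getD m 0 = t.getD m 0 := by
    intro m hm; exact face_middle_getD_lt h0 hlne hil hm
  have hgeq : σ.getD (i - 1) 0 = t.getD (i - 1) 0 + t.getD i 0 :=
    face_middle_getD_eq h0 hlne hil
  have hggt : ∀ m, i ≤ m → σ.getD m 0 = t.getD (m + 1) 0 := by
    intro m hm; exact face_middle_getD_gt h0 hlne hil hm
  have hxp : isPow (t.getD (i - 1) 0) := pow_of_lt_dyLen (by omega)
  have hyp : isPow (t.getD i 0) := pow_of_lt_dyLen (by omega)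
  obtain ⟨e1, he1⟩ : ∃ e, t.getD (i - 1) 0 = 2 ^ e := ⟨_, hxp⟩
  obtain ⟨e2, he2⟩ : ∃ e, t.getD i 0 = 2 ^ e := ⟨_, hyp⟩
  by_cases hc0 : isPow (σ.getD (i - 1) 0)
  · -- merged entry still a power: breakpoint stays b
    have hdq : dyLen σ = q - 1 := by
      apply dyLen_eq_of (by omega)
      · intro m hm
        rcases Nat.lt_or_ge m (i - 1) with h | h
        · rw [hglt m h]; exact pow_of_lt_dyLen (by omega)
        · rcases Nat.lt_or_ge m i with h2 | h2
          · have h9 : m = i - 1 := by omega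
            rw [h9]; exact hc0
          · rw [hggt m h2]; exact pow_of_lt_dyLen (by omega)
      · rw [hggt (q - 1) (by omega)]
        have h9 : q - 1 + 1 = q := by omega
        rw [h9]; exact hbnp
    have hcval : σ.getD (dyLen σ) 0 = t.getD q 0 := by
      rw [hdq, hggt (q - 1) (by omega)]
      congr 1
      omega
    apply KEY2 (by omega) (by rw [hcval]; exact hbnp) hpos (by omega) (by omega)
    · intro m hm hml
      rw [hggt m (by omega)]
      exact hraw (m + 1) (by omega) (by omega)
    · rw [hcval]
      intro hnp
      have h12 : dyLen σ + 2 = q + 1 := by omega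
      rw [h12]
      exact bp_mem_of hq1 hqlen hb1 hbnp hbp
  · -- merged entry not a power: σ's breakpoint is 2^e1 + 2^e2, split into 2^max, 2^min
    have hee : e1 ≠ e2 := by
      rintro rfl
      apply hc0
      rw [hgeq, he1, he2, ← two_mul, ← pow_succ']
      exact isPow_two_pow _
    have hdq : dyLen σ = i - 1 := by
      apply dyLen_eq_of (by omega)
      · intro m hm
        rw [hglt m hm]; exact pow_of_lt_dyLen (by omega)
      · exact hc0
    have hd : dyLen σ < σ.length := by omega
    have hlp : lpow (σ.getD (dyLen σ) 0) = 2 ^ max e1 e2 ∧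
        ltrim (σ.getD (dyLen σ) 0) = 2 ^ min e1 e2 := by
      rw [hdq, hgeq, he1, he2]
      rcases Nat.lt_or_ge e1 e2 with h | h
      · have h2 := lpow_add_pow_lt h
        rw [add_comm]
        rw [max_eq_right (by omega), min_eq_left (by omega)]
        exact h2
      · have h' : e2 < e1 := by omega
        have h2 := lpow_add_pow_lt h'
        rw [max_eq_left (by omega), min_eq_right (by omega)]
        exact h2
    have hc1 : 1 ≤ σ.getD (dyLen σ) 0 := hpos _ (getD_mem hd)
    -- getD values of VbcA σ
    have hv_lt : ∀ m, m < i - 1 → (VbcA σ).getD m 0 = t.getD m 0 := by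
      intro m hm
      rw [VbcA_getD_lt (by omega), hglt m hm]
    have hv_i1 : (VbcA σ).getD (i - 1) 0 = 2 ^ max e1 e2 := by
      have := VbcA_getD_bp hd
      rw [hdq] at this
      rw [this, ← hdq, hlp.1]
    have hv_i : (VbcA σ).getD i 0 = 2 ^ min e1 e2 := by
      have := VbcA_getD_bp1 hd
      rw [hdq] at this
      have h9 : i - 1 + 1 = i := by omega
      rw [h9] at this
      rw [this, ← hdq, hlp.2]
    have hv_gt : ∀ m, i + 1 ≤ m → (VbcA σ).getD m 0 = t.getD m 0 := by
      intro m hm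
      rw [VbcA_getD_ge hd (by omega), hggt (m - 1) (by omega)]
      congr 1
      omega
    apply KEY (k := q)
    · rw [VbcA_length hd]; omega
    · intro m hm
      rcases Nat.lt_or_ge m (i - 1) with h | h
      · rw [hv_lt m h]; exact pow_of_lt_dyLen (by omega)
      rcases Nat.lt_or_ge m i with h2 | h2
      · have h9 : m = i - 1 := by omega
        rw [h9, hv_i1]; exact isPow_two_pow _
      rcases Nat.lt_or_ge m (i + 1) with h3 | h3
      · have h9 : m = i := by omega
        rw [h9, hv_i]; exact isPow_two_pow _
      · rw [hv_gt m h3]; exact pow_of_lt_dyLen (by omega)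
    · refine ⟨i - 1, by omega, ?_⟩
      have h9 : i - 1 + 1 = i := by omega
      rw [h9, hv_i, hv_i1]
      exact Nat.pow_lt_pow_right (by norm_num) (by omega)
    · intro m hm hml
      rw [VbcA_length hd] at hml
      rw [hv_gt m (by omega)]
      exact hraw m (by omega) (by omega)
    · have hvq : (VbcA σ).getD q 0 = t.getD q 0 := hv_gt q (by omega)
      rw [hvq]
      intro _
      rcases hbp with hrawb | ⟨hbd, hmem⟩
      · exact Or.inl hrawb
      · right
        refine ⟨?_, hmem⟩
        -- b < foldr max of the new prefix
        obtain ⟨z, hz, hbz⟩ := exists_of_lt_foldrMax hbd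
        obtain ⟨m, hm1, hm2, rfl⟩ := exists_getD_of_mem_take hz
        have hfold : ∀ m', m' < q → t.getD m' 0 ≤ ((VbcA σ).take q).foldr max 0 := by
          intro m' hm'
          have hlen' : m' < (VbcA σ).length := by rw [VbcA_length hd]; omega
          rcases Nat.lt_or_ge m' (i - 1) with h | h
          · rw [← hv_lt m' h]
            exact le_foldrMax (getD_mem_take hm' hlen')
          rcases Nat.lt_or_ge m' (i + 1) with h2 | h2
          · -- t[m'] is 2^e1 or 2^e2 ≤ 2^max = (VbcA σ)[i-1]
            have hle : t.getD m' 0 ≤ 2 ^ max e1 e2 := by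
              rcases Nat.lt_or_ge m' i with h3 | h3
              · have h9 : m' = i - 1 := by omega
                rw [h9, he1]
                exact Nat.pow_le_pow_right (by norm_num) (by omega)
              · have h9 : m' = i := by omega
                rw [h9, he2]
                exact Nat.pow_le_pow_right (by norm_num) (by omega)
            refine le_trans hle ?_
            rw [← hv_i1]
            exact le_foldrMax (getD_mem_take (by omega)
              (by rw [VbcA_length hd]; omega))
          · rw [← hv_gt m' h2]
            exact le_foldrMax (getD_mem_take hm' hlen')
        exact lt_of_lt_of_le hbz (hfold m hm1)
    · exact VbcA_posL hd hpos (by rw [hdq]; exact hc0)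
    · rw [VbcA_length hd]; omega
    · rw [VbcA_sum hd hc1]; omega
lemma stepA_bp {tt t : List ℕ} (hInv : NInv tt t) (hpos : posL (faceN (dyLen t) t))
    (hsrc : srcA (faceN (dyLen t) t)) : BInv tt (VbcA (faceN (dyLen t) t)) := by
  obtain ⟨hposT, hlenT, hsumT, hq1, hqlen, hnsrcA, hraw, hbp⟩ := hInv
  set q := dyLen t with hq
  set σ := faceN q t with hσ
  have h0 : q ≠ 0 := by omega
  have hlne : q ≠ t.length := by omega
  have hil : q ≤ t.length := by omega
  have hbnp : ¬ isPow (t.getD q 0) := not_pow_dyLen hqlen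
  have hb1 : 1 ≤ t.getD q 0 := hposT _ (getD_mem hqlen)
  have hlenσ : σ.length = t.length - 1 := face_middle_length h0 hlne hil
  have hsumσ : σ.sum = t.sum := face_middle_sum h0 hlne hil
  have hglt : ∀ m, m < q - 1 → σ.getD m 0 = t.getD m 0 := by
    intro m hm; exact face_middle_getD_lt h0 hlne hil hm
  have hgeq : σ.getD (q - 1) 0 = t.getD (q - 1) 0 + t.getD q 0 :=
    face_middle_getD_eq h0 hlne hil
  have hggt : ∀ m, q ≤ m → σ.getD m 0 = t.getD (m + 1) 0 := by
    intro m hm; exact face_middle_getD_gt h0 hlne hil hm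
  have hxp : isPow (t.getD (q - 1) 0) := pow_of_lt_dyLen (by omega)
  obtain ⟨a, ha⟩ : ∃ e, t.getD (q - 1) 0 = 2 ^ e := ⟨_, hxp⟩
  by_cases hc0 : isPow (σ.getD (q - 1) 0)
  · -- merged entry a power: breakpoint of σ lies in the raw zone
    obtain ⟨hd, _, _⟩ := hsrc
    have hdge : q ≤ dyLen σ := by
      apply le_dyLen_of (by omega)
      intro m hm
      rcases Nat.lt_or_ge m (q - 1) with h | h
      · rw [hglt m h]; exact pow_of_lt_dyLen (by omega)
      · have h9 : m = q - 1 := by omega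
        rw [h9]; exact hc0
    have hrawσ : ∀ m, q ≤ m → m < σ.length → σ.getD m 0 = tt.getD (m + 1) 0 := by
      intro m hm hml
      rw [hggt m hm]
      exact hraw (m + 1) (by omega) (by omega)
    apply KEY2 hd (not_pow_dyLen hd) hpos (by omega) (by omega)
    · intro m hm hml
      exact hrawσ m (by omega) hml
    · intro hnp
      have hdval : σ.getD (dyLen σ) 0 = tt.getD (dyLen σ + 1) 0 := hrawσ _ (by omega) hd
      have hl0 : ltrim (σ.getD (dyLen σ) 0) ≠ 0 := by
        have := ltrim_pos_of (hpos _ (getD_mem hd)) (not_pow_dyLen hd); omega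
      apply Bse1 (fun j => tt.getD (j - 1) 0) (sizeL tt) (j := dyLen σ)
      show ltrim _ ∈ ltrims (tt.getD (dyLen σ + 2 - 1) 0)
      have h9 : dyLen σ + 2 - 1 = dyLen σ + 1 := by omega
      rw [h9, ← hdval]
      exact mem_ltrims_self hl0
  · -- merged entry is the breakpoint: c₀ = 2^a + b
    have hdq : dyLen σ = q - 1 := by
      apply dyLen_eq_of (by omega)
      · intro m hm
        rw [hglt m hm]; exact pow_of_lt_dyLen (by omega)
      · exact hc0
    have hc1 : 1 ≤ σ.getD (q - 1) 0 := by rw [hgeq]; omega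
    have hl0 : ltrim (σ.getD (q - 1) 0) ≠ 0 := by
      have := ltrim_pos_of hc1 hc0; omega
    apply KEY2 (by omega) (by rw [hdq]; exact hc0) hpos (by omega) (by omega)
    · intro m hm hml
      rw [hggt m (by omega)]
      exact hraw (m + 1) (by omega) (by omega)
    · rw [hdq]
      intro hnp
      have h12 : q - 1 + 2 = q + 1 := by omega
      rw [h12]
      rcases hbp with hrawb | ⟨hbd, hmem2⟩
      · -- raw breakpoint: use the 2^i-term of Bset
        have ha_n : a < sizeL tt := by
          apply pow_lt_sizeL
          rw [← ha]
          calc t.getD (q - 1) 0 ≤ t.sum := mem_le_sum (getD_mem (by omega))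
          _ ≤ tt.sum := hsumT
          _ < 2 ^ sizeL tt := sum_lt_two_pow_sizeL tt
        rw [← h12]
        apply Bse3 (fun j => tt.getD (j - 1) 0) (sizeL tt) (j := q - 1) (i := a) ha_n
        show ltrim _ ∈ ltrims (2 ^ a + tt.getD (q - 1 + 2 - 1) 0)
        have h13 : q - 1 + 2 - 1 = q := by omega
        rw [h13, ← hrawb, ← ha, ← hgeq]
        exact mem_ltrims_self hl0
      · -- breakpoint from B: the arithmetic trichotomy
        rcases Nat.lt_or_ge (t.getD q 0) (t.getD (q - 1) 0) with hblt | hxle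
        · -- b < 2^a : ltrim (2^a + b) = b
          have hsm := lpow_add_small hb1 (by rw [← ha]; exact hblt)
          have : ltrim (σ.getD (q - 1) 0) = t.getD q 0 := by
            rw [hgeq, ha, hsm.2]
          rw [this]
          exact hmem2
        · -- 2^a ≤ b : chain lemma
          have hal : 2 ^ a ≤ lpow (t.getD q 0) := by
            have h1 : a ≤ Nat.log 2 (t.getD q 0) :=
              Nat.le_log_of_pow_le (by norm_num) (by omega)
            exact Nat.pow_le_pow_right (by norm_num) h1
          have h2l : 2 * lpow (t.getD q 0) ≤ 2 ^ a + t.getD q 0 := by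
            by_contra hcon
            push_neg at hcon
            obtain ⟨z, hz, hbz⟩ := exists_of_lt_foldrMax hbd
            obtain ⟨m, hm1, hm2, rfl⟩ := exists_getD_of_mem_take hz
            have hzp : isPow (t.getD m 0) := pow_of_lt_dyLen hm1
            rcases Nat.lt_or_ge m (q - 1) with hmlt | hmge
            · -- t[m] is below a peak < c₀, and powers can't live in (b, 2·lpow b)
              have hq2 : 2 ≤ q := by omega
              have hchain : σ.getD m 0 ≤ σ.getD (q - 2) 0 := by
                apply chain_le hsrc.2.1 (by omega)
                rw [hdq]; omega
              have hpeak := hsrc.2.2 (q - 2) (by rw [hdq]; omega)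
              rw [hdq] at hpeak
              have hzc : t.getD m 0 < σ.getD (q - 1) 0 := by
                rw [← hglt m hmlt]
                omega
              rw [hgeq, ha] at hzc
              exact no_pow_between hb1 hzp hbz (by omega)
            · -- z = x itself: b < x contradicts x ≤ b
              have h9 : m = q - 1 := by omega
              rw [h9] at hbz
              omega
          have hch := chain_ltrim (t.getD q 0) hb1 a hal h2l
          have hrw : ltrim (σ.getD (q - 1) 0) = ltrim (2 ^ a + t.getD q 0) := by
            rw [hgeq, ha]
          rw [hrw] at hnp hl0 ⊢
          rcases hch with h | h | h
          · omega
          · exact absurd h hnp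
          · exact Bset_closed _ _ hmem2 h
lemma stepA' {tt t σ : List ℕ} {i : ℕ} (hInv : NInv tt t) (hi : i ≤ t.length)
    (hface : σ = faceN i t) (hpos : posL σ) (hsrc : srcA σ) : BInv tt (VbcA σ) := by
  have hq1 : 1 ≤ dyLen t := hInv.2.2.2.1
  have hqlen : dyLen t < t.length := hInv.2.2.2.2.1
  subst hface
  rcases Nat.eq_zero_or_pos i with rfl | hi0
  · rw [face_zero t] at hsrc hpos ⊢
    exact stepA_zero hInv hsrc
  rcases eq_or_lt_of_le hi with rfl | hilt
  · rw [face_last t (by omega)] at hsrc hpos ⊢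
    exact stepA_last hInv (by omega) hsrc
  rcases Nat.lt_or_ge i (dyLen t) with h | h
  · exact stepA_pre hInv (by omega) h hpos hsrc
  rcases eq_or_lt_of_le h with heq | h2
  · rw [← heq] at hsrc hpos ⊢
    exact stepA_bp hInv hpos hsrc
  rcases eq_or_lt_of_le (show dyLen t + 1 ≤ i by omega) with heq2 | h3
  · rw [← heq2] at hsrc hpos ⊢
    exact stepA_bpnext hInv (by omega) (by omega) hpos hsrc
  · exact absurd hsrc (fun hs => stepA_right hInv (by omega) (by omega) hilt (by omega) hs)

lemma startInv {tt : List ℕ} (hpos : posL tt) (htgt : ∃ s, posL s ∧ VbcRel s tt) :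
    BInv tt tt := by
  obtain ⟨s, hspos, hrel⟩ := htgt
  rcases hrel with ⟨hsrc, rfl⟩ | ⟨hsrc, rfl⟩
  · have hd := hsrc.1
    have hcnp := not_pow_dyLen hd
    have hc1 : 1 ≤ s.getD (dyLen s) 0 := hspos _ (getD_mem hd)
    apply KEY (k := dyLen s + 1)
    · rw [VbcA_length hd]; omega
    · exact VbcA_take_pow hd le_rfl
    · refine ⟨dyLen s, le_rfl, ?_⟩
      rw [VbcA_getD_bp1 hd, VbcA_getD_bp hd]
      exact ltrim_lt_lpow hc1
    · intro m _ _; rfl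
    · intro _; exact Or.inl rfl
    · exact VbcA_posL hd hspos hcnp
    · rfl
    · exact le_rfl
  · exact Or.inl (srcB_fd hsrc)

lemma BInv_not_srcA {tt x : List ℕ} (h : BInv tt x) (hs : srcA x) : False := by
  rcases h with h | h
  · have h1 := hs.1
    unfold fullyDyadic at h
    omega
  · exact h.2.2.2.2.2.1 hs

lemma Vbc_of_BInv {tt x y : List ℕ} (h : BInv tt x) (hrel : VbcRel x y) : BInv tt y := by
  rcases hrel with ⟨hsrc, rfl⟩ | ⟨hsrc, rfl⟩
  · exact absurd hsrc fun hs => BInv_not_srcA h hs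
  · exact Or.inl (srcB_fd hsrc)

lemma Vbc_of_face {tt τ x y : List ℕ} {i : ℕ} (hB : BInv tt τ) (hi : i ≤ τ.length)
    (hface : x = faceN i τ) (hpos : posL x) (hrel : VbcRel x y) : BInv tt y := by
  rcases hrel with ⟨hsrc, rfl⟩ | ⟨hsrc, rfl⟩
  · rcases hB with hfd | hN
    · exact Or.inl (absorb hfd hi hface hsrc)
    · exact stepA' hN hi hface hpos hsrc
  · exact Or.inl (srcB_fd hsrc)

def GInv (tt x : List ℕ) : Prop :=
  BInv tt x ∨ (∃ τ i, BInv tt τ ∧ i ≤ τ.length ∧ x = faceN i τ ∧ posL x ∧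
    ¬ ∃ s, posL s ∧ VbcRel s x)

lemma GInv_step {tt x y : List ℕ} (hG : GInv tt x) (he : edgeBc x y) : GInv tt y := by
  rcases he with ⟨hxpos, hrel⟩ | ⟨htgt, i, hi, hfy, hypos, _, hnt⟩
  · rcases hG with hB | ⟨τ, j, hB, hj, hface, hxpos', _⟩
    · exact Or.inl (Vbc_of_BInv hB hrel)
    · exact Or.inl (Vbc_of_face hB hj hface hxpos' hrel)
  · rcases hG with hB | ⟨τ, j, hB, hj, hface, hxpos', hnt'⟩
    · exact Or.inr ⟨x, i, hB, hi, hfy, hypos, hnt⟩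
    · exact absurd htgt hnt'

/-- Key lemma for the bit-chipping field: if `τ = [2^{i_1} | ⋯ | 2^{i_q} | b | a_{q+2} | ⋯]`
is a not-fully-dyadic target reachable from a target `τ̃ = [ã_1 | ⋯ | ã_k]` of bit-size
`n` in the `V∂`-graph, then the right part is inherited from `τ̃` (`a_i = ã_i` for all
`i ≥ q + 2`), and either `b = ã_{q+1}` (`τ` is raw), or `b` is smaller than the maximum
of the dyadic part of `τ` and `b ∈ B_{q+1}`. -/
theorem stmt19 (tτ τ : List ℕ) (hpos : posL tτ)
    (htgt : ∃ s, posL s ∧ VbcRel s tτ)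
    (hreach : Relation.ReflTransGen edgeBc tτ τ)
    (hτtgt : ∃ s, posL s ∧ VbcRel s τ)
    (hnfd : ¬ fullyDyadic τ) :
    (∀ i, dyLen τ + 1 ≤ i → i < τ.length → τ.getD i 0 = tτ.getD i 0) ∧
    (τ.getD (dyLen τ) 0 = tτ.getD (dyLen τ) 0 ∨
      (τ.getD (dyLen τ) 0 < (τ.take (dyLen τ)).foldr max 0 ∧
        τ.getD (dyLen τ) 0 ∈ Bset (fun j => tτ.getD (j - 1) 0) (sizeL tτ) (dyLen τ + 1))) := by
  have hG : GInv tτ τ := by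
    clear hτtgt hnfd
    induction hreach with
    | refl => exact Or.inl (startInv hpos htgt)
    | tail hsteps he ih => exact GInv_step ih he
  rcases hG with hB | ⟨_, _, _, _, _, _, hnt⟩
  · rcases hB with hfd | hN
    · exact absurd hfd hnfd
    · exact ⟨hN.2.2.2.2.2.2.1, hN.2.2.2.2.2.2.2⟩
  · exact absurd hτtgt hnt
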